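/- The cardinal B-spline φ of order m satisfies the two-scale relation: φ(x) = 2^{1-m} ∑_{k=0}^{m} (m choose k) φ(2x - k) for all real x. -/

import Mathlib

noncomputable def truncPow (t : ℝ) (k : ℕ) : ℝ := if 0 < t then t ^ k else 0

/-- The cardinal B-spline of order `m`. -/
noncomputable def bspline (m : ℕ) (x : ℝ) : ℝ :=
  (1 / (Nat.factorial m : ℝ)) *
    ∑ i ∈ Finset.range (m + 1),
      (-1 : ℝ) ^ i * (Nat.choose m i : ℝ) * truncPow (x - (i : ℝ)) (m - 1)

open Finset Polynomial

lemma coeff_one_sub_X_pow (m i : ℕ) :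
    (((1 : ℝ[X]) - X) ^ m).coeff i = (-1 : ℝ) ^ i * (m.choose i : ℝ) := by
  have h : ((1 : ℝ[X]) - X) = Polynomial.C (-1 : ℝ) * (X + Polynomial.C (-1 : ℝ)) := by
    simp [mul_add]; ring
  rw [h, mul_pow, ← Polynomial.C_pow, Polynomial.coeff_C_mul, Polynomial.coeff_X_add_C_pow]
  by_cases hi : i ≤ m
  · have h4 : ((-1 : ℝ)) ^ (m + (m - i)) = (-1) ^ i := by
      have e : m + (m - i) = i + 2 * (m - i) := by omega
      rw [e, pow_add, pow_mul, neg_one_sq, one_pow, mul_one]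
    rw [← mul_assoc, ← pow_add, h4]
  · rw [Nat.choose_eq_zero_of_lt (not_le.mp hi)]
    simp

lemma coeff_one_sub_X_sq_pow (m j : ℕ) :
    (((1 : ℝ[X]) - X ^ 2) ^ m).coeff j =
      if j % 2 = 0 then (-1 : ℝ) ^ (j / 2) * (m.choose (j / 2) : ℝ) else 0 := by
  have h : ((1 : ℝ[X]) - X ^ 2) = (-(X ^ 2)) + 1 := by ring
  rw [h, add_pow]
  rw [Polynomial.finset_sum_coeff]
  have hterm : ∀ k ∈ Finset.range (m + 1),
      ((-(X ^ 2) : ℝ[X]) ^ k * 1 ^ (m - k) * (m.choose k : ℝ[X])).coeff j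
        = if k = j / 2 ∧ j % 2 = 0 then (-1 : ℝ) ^ k * (m.choose k : ℝ) else 0 := by
    intro k _
    have he : ((-(X ^ 2) : ℝ[X]) ^ k * 1 ^ (m - k) * (m.choose k : ℝ[X]))
        = Polynomial.C ((-1 : ℝ) ^ k * (m.choose k : ℝ)) * X ^ (2 * k) := by
      rw [one_pow, mul_one, neg_pow, ← pow_mul, map_mul, map_pow, map_neg, map_one,
        Polynomial.C_eq_natCast]
      ring
    rw [he, Polynomial.coeff_C_mul, Polynomial.coeff_X_pow]
    have hiff : (j = 2 * k) ↔ (k = j / 2 ∧ j % 2 = 0) := by omega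
    simp only [hiff]
    split <;> simp
  rw [Finset.sum_congr rfl hterm]
  by_cases hj : j % 2 = 0
  · simp only [hj, and_true]
    rw [Finset.sum_ite_eq' (Finset.range (m + 1)) (j / 2)
        (fun k => (-1 : ℝ) ^ k * (m.choose k : ℝ))]
    by_cases hmem : j / 2 ∈ Finset.range (m + 1)
    · simp [hmem]
    · simp only [hmem, if_false, if_true]
      rw [Nat.choose_eq_zero_of_lt (by simpa using hmem)]
      simp
  · simp [hj]

lemma key (m j : ℕ) :
    ∑ p ∈ Finset.HasAntidiagonal.antidiagonal j,
        (-1 : ℝ) ^ p.1 * (m.choose p.1 : ℝ) * (m.choose p.2 : ℝ) =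
      if j % 2 = 0 then (-1 : ℝ) ^ (j / 2) * (m.choose (j / 2) : ℝ) else 0 := by
  have h : (((1 : ℝ[X]) - X) ^ m * ((1 : ℝ[X]) + X) ^ m) = ((1 : ℝ[X]) - X ^ 2) ^ m := by
    rw [← mul_pow]; congr 1; ring
  have h2 := congrArg (fun p => Polynomial.coeff p j) h
  simp only [Polynomial.coeff_mul] at h2
  rw [← coeff_one_sub_X_sq_pow, ← h2]
  refine Finset.sum_congr rfl fun p _ => ?_
  rw [coeff_one_sub_X_pow, Polynomial.coeff_one_add_X_pow]

lemma truncPow_two_mul (s : ℝ) (n : ℕ) :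
    truncPow (2 * s) n = 2 ^ n * truncPow s n := by
  unfold truncPow
  have : (0 < 2 * s) ↔ (0 < s) := by constructor <;> intro h <;> nlinarith
  rw [if_congr this rfl rfl]
  split
  · rw [mul_pow]
  · rw [mul_zero]

lemma even_sum (N : ℕ) (h : ℕ → ℝ) :
    ∑ j ∈ Finset.range (2 * N + 1), (if j % 2 = 0 then h (j / 2) else 0)
      = ∑ l ∈ Finset.range (N + 1), h l := by
  induction N with
  | zero => simp
  | succ N ih =>
    have e : 2 * (N + 1) + 1 = (2 * N + 1) + 1 + 1 := by ring
    rw [e, Finset.sum_range_succ, Finset.sum_range_succ, ih, Finset.sum_range_succ h (N + 1)]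
    have h1 : (2 * N + 1) % 2 = 1 := by omega
    have h2 : (2 * N + 1 + 1) % 2 = 0 := by omega
    have h3 : (2 * N + 1 + 1) / 2 = N + 1 := by omega
    simp [h1, h2, h3]

/-- the two-scale relation
phi(x) = 2^(1-m) * sum_(k=0)^m (m choose k) phi(2x - k). -/
theorem bspline_two_scale (m : ℕ) (hm : 1 ≤ m) (x : ℝ) :
    bspline m x =
      (2 : ℝ) ^ (1 - (m : ℤ)) *
        ∑ k ∈ Finset.range (m + 1), (Nat.choose m k : ℝ) * bspline m (2 * x - (k : ℝ)) := by
  classical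
  set F : ℕ × ℕ → ℝ := fun p =>
    (-1 : ℝ) ^ p.1 * (m.choose p.1 : ℝ) * (m.choose p.2 : ℝ) *
      truncPow (2 * x - ((p.1 + p.2 : ℕ) : ℝ)) (m - 1) with hF
  have step1 : ∑ k ∈ Finset.range (m + 1), (m.choose k : ℝ) * bspline m (2 * x - (k : ℝ))
      = (1 / (Nat.factorial m : ℝ)) *
        ∑ p ∈ Finset.range (m + 1) ×ˢ Finset.range (m + 1), F p := by
    rw [Finset.sum_product_right, Finset.mul_sum]
    refine Finset.sum_congr rfl fun k _ => ?_
    unfold bspline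
    rw [Finset.mul_sum, Finset.mul_sum, Finset.mul_sum]
    refine Finset.sum_congr rfl fun i _ => ?_
    have hc : (2 * x - (k : ℝ)) - (i : ℝ) = 2 * x - ((i + k : ℕ) : ℝ) := by
      push_cast; ring
    rw [hF]
    simp only []
    rw [hc]
    ring
  have hsub : Finset.range (m + 1) ×ˢ Finset.range (m + 1) ⊆
      (Finset.range (2 * m + 1)).biUnion Finset.HasAntidiagonal.antidiagonal := by
    intro p hp
    rw [Finset.mem_product, Finset.mem_range, Finset.mem_range] at hp
    rw [Finset.mem_biUnion]
    exact ⟨p.1 + p.2, Finset.mem_range.mpr (by omega), Finset.HasAntidiagonal.mem_antidiagonal.mpr rfl⟩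
  have hzero : ∀ p ∈ (Finset.range (2 * m + 1)).biUnion Finset.HasAntidiagonal.antidiagonal,
      p ∉ Finset.range (m + 1) ×ˢ Finset.range (m + 1) → F p = 0 := by
    intro p _ hp
    rw [Finset.mem_product, Finset.mem_range, Finset.mem_range] at hp
    push_neg at hp
    rw [hF]
    simp only []
    rcases lt_or_ge m p.1 with h | h
    · rw [Nat.choose_eq_zero_of_lt h]; ring
    · rw [Nat.choose_eq_zero_of_lt (hp (by omega))]; ring
  have step2 : ∑ p ∈ Finset.range (m + 1) ×ˢ Finset.range (m + 1), F p
      = ∑ j ∈ Finset.range (2 * m + 1), ∑ p ∈ Finset.HasAntidiagonal.antidiagonal j, F p := by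
    rw [Finset.sum_subset hsub hzero]
    rw [Finset.sum_biUnion]
    intro a _ b _ hab
    simp only [Function.onFun]
    rw [Finset.disjoint_left]
    intro p hpa hpb
    rw [Finset.HasAntidiagonal.mem_antidiagonal] at hpa hpb
    exact hab (hpa ▸ hpb)
  have step3 : ∀ j, ∑ p ∈ Finset.HasAntidiagonal.antidiagonal j, F p
      = (if j % 2 = 0 then (-1 : ℝ) ^ (j / 2) * (m.choose (j / 2) : ℝ) else 0) *
          truncPow (2 * x - (j : ℝ)) (m - 1) := by
    intro j
    rw [← key m j, Finset.sum_mul]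
    refine Finset.sum_congr rfl fun p hp => ?_
    rw [Finset.HasAntidiagonal.mem_antidiagonal] at hp
    rw [hF]
    simp only []
    rw [hp]
  have step4 : ∑ j ∈ Finset.range (2 * m + 1),
      (if j % 2 = 0 then (-1 : ℝ) ^ (j / 2) * (m.choose (j / 2) : ℝ) else 0) *
        truncPow (2 * x - (j : ℝ)) (m - 1)
      = ∑ l ∈ Finset.range (m + 1),
          (-1 : ℝ) ^ l * (m.choose l : ℝ) * truncPow (2 * x - ((2 * l : ℕ) : ℝ)) (m - 1) := by
    rw [← even_sum m (fun l => (-1 : ℝ) ^ l * (m.choose l : ℝ) *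
        truncPow (2 * x - ((2 * l : ℕ) : ℝ)) (m - 1))]
    refine Finset.sum_congr rfl fun j _ => ?_
    by_cases hj : j % 2 = 0
    · simp only [hj, if_true]
      have hjj : (2 * (j / 2) : ℕ) = j := by omega
      rw [hjj]
    · simp [hj]
  have step5 : ∀ l : ℕ, truncPow (2 * x - ((2 * l : ℕ) : ℝ)) (m - 1)
      = 2 ^ (m - 1) * truncPow (x - (l : ℝ)) (m - 1) := by
    intro l
    have : 2 * x - ((2 * l : ℕ) : ℝ) = 2 * (x - (l : ℝ)) := by push_cast; ring
    rw [this, truncPow_two_mul]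
  have hpow : (2 : ℝ) ^ (1 - (m : ℤ)) * 2 ^ (m - 1) = 1 := by
    rw [show ((2 : ℝ) ^ (m - 1) = (2 : ℝ) ^ ((m - 1 : ℕ) : ℤ)) from (zpow_natCast 2 (m - 1)).symm,
      ← zpow_add₀ (by norm_num : (2:ℝ) ≠ 0)]
    have : 1 - (m : ℤ) + ((m - 1 : ℕ) : ℤ) = 0 := by
      push_cast [Nat.cast_sub hm]; ring
    rw [this, zpow_zero]
  rw [step1, step2, Finset.sum_congr rfl fun j _ => step3 j, step4,
    Finset.sum_congr rfl fun l _ => by rw [step5 l]]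
  have hfac : ∑ l ∈ Finset.range (m + 1),
      (-1 : ℝ) ^ l * (m.choose l : ℝ) * (2 ^ (m - 1) * truncPow (x - (l : ℝ)) (m - 1))
      = 2 ^ (m - 1) * ∑ l ∈ Finset.range (m + 1),
          (-1 : ℝ) ^ l * (m.choose l : ℝ) * truncPow (x - (l : ℝ)) (m - 1) := by
    rw [Finset.mul_sum]
    exact Finset.sum_congr rfl fun l _ => by ring
  rw [hfac]
  unfold bspline
  rw [show (2 : ℝ) ^ (1 - (m : ℤ)) * (1 / (Nat.factorial m : ℝ) *
      (2 ^ (m - 1) * ∑ l ∈ Finset.range (m + 1),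
        (-1 : ℝ) ^ l * (m.choose l : ℝ) * truncPow (x - (l : ℝ)) (m - 1)))
      = ((2 : ℝ) ^ (1 - (m : ℤ)) * 2 ^ (m - 1)) * (1 / (Nat.factorial m : ℝ) *
        ∑ l ∈ Finset.range (m + 1),
          (-1 : ℝ) ^ l * (m.choose l : ℝ) * truncPow (x - (l : ℝ)) (m - 1)) from by ring,
    hpow, one_mul]
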